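/- Let D be a domain with quotient field K and define Int_k := {g ∈ K[x] : g(C) ∈ T_k(D) for all C ∈ T_k(D)}. Then Int_i · Int_j ⊆ Int_{min(i,j)}. -/
import Mathlib

section aux

variable {K : Type*} [CommRing K]

/-- Pad an `m × m` matrix to an `n × n` matrix with zeros. -/
def padMat {m n : ℕ} (C : Matrix (Fin m) (Fin m) K) : Matrix (Fin n) (Fin n) K :=
  fun a b => if ha : (a : ℕ) < m then if hb : (b : ℕ) < m then C ⟨a, ha⟩ ⟨b, hb⟩ else 0 else 0

lemma sum_pad {m n : ℕ} (h : m ≤ n) (F : Fin n → K) (hF : ∀ c : Fin n, ¬ ((c : ℕ) < m) → F c = 0) :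
    ∑ c : Fin n, F c = ∑ c : Fin m, F (Fin.castLE h c) := by
  have hm := Finset.sum_map Finset.univ (Fin.castLEEmb h) F
  simp only [Fin.castLEEmb_apply] at hm
  rw [← hm]
  refine (Finset.sum_subset (Finset.subset_univ _) ?_).symm
  intro c _ hc
  refine hF c fun hlt => hc ?_
  simp only [Finset.mem_map, Finset.mem_univ, true_and, Fin.castLEEmb_apply]
  exact ⟨⟨c, hlt⟩, by ext; simp⟩

lemma padMat_pow {m n : ℕ} (h : m ≤ n) (C : Matrix (Fin m) (Fin m) K) (k : ℕ) (a b : Fin m) :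
    ((padMat C : Matrix (Fin n) (Fin n) K) ^ k) (Fin.castLE h a) (Fin.castLE h b)
      = (C ^ k) a b := by
  induction k generalizing a b with
  | zero =>
      simp [Matrix.one_apply, Fin.ext_iff]
  | succ k ih =>
      rw [pow_succ', pow_succ', Matrix.mul_apply, Matrix.mul_apply]
      rw [sum_pad h]
      · refine Finset.sum_congr rfl fun c _ => ?_
        have h1 : (padMat C : Matrix (Fin n) (Fin n) K) (Fin.castLE h a) (Fin.castLE h c)
            = C a c := by
          simp [padMat]
        rw [h1, ih]
      · intro c hc
        have : (padMat C : Matrix (Fin n) (Fin n) K) (Fin.castLE h a) c = 0 := by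
          simp only [padMat, Fin.coe_castLE]
          rw [dif_pos a.isLt, dif_neg hc]
        rw [this, zero_mul]

lemma padMat_aeval {m n : ℕ} (h : m ≤ n) (C : Matrix (Fin m) (Fin m) K) (p : Polynomial K)
    (a b : Fin m) :
    (Polynomial.aeval (padMat C : Matrix (Fin n) (Fin n) K) p) (Fin.castLE h a) (Fin.castLE h b)
      = (Polynomial.aeval C p) a b := by
  rw [Polynomial.aeval_eq_sum_range, Polynomial.aeval_eq_sum_range]
  simp only [Matrix.sum_apply, Matrix.smul_apply]
  exact Finset.sum_congr rfl fun k _ => by rw [padMat_pow h C k a b]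

end aux

/-- Let `D` be a domain with quotient field `K` and
`Int_k := {g ∈ K[x] : g(C) ∈ T_k(D) for all C ∈ T_k(D)}`.
Then `Int_i · Int_j ⊆ Int_{min(i,j)}`. -/
theorem stmt12 (D K : Type*) [CommRing D] [IsDomain D] [Field K] [Algebra D K]
    [IsFractionRing D K] (i j : ℕ) (g h : Polynomial K)
    (hg : ∀ C : Matrix (Fin i) (Fin i) K, C.BlockTriangular id →
        (∀ a b, C a b ∈ Set.range (algebraMap D K)) →
        (Polynomial.aeval C g).BlockTriangular id ∧
          ∀ a b, (Polynomial.aeval C g) a b ∈ Set.range (algebraMap D K))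
    (hh : ∀ C : Matrix (Fin j) (Fin j) K, C.BlockTriangular id →
        (∀ a b, C a b ∈ Set.range (algebraMap D K)) →
        (Polynomial.aeval C h).BlockTriangular id ∧
          ∀ a b, (Polynomial.aeval C h) a b ∈ Set.range (algebraMap D K)) :
    ∀ C : Matrix (Fin (min i j)) (Fin (min i j)) K, C.BlockTriangular id →
        (∀ a b, C a b ∈ Set.range (algebraMap D K)) →
        (Polynomial.aeval C (g * h)).BlockTriangular id ∧
          ∀ a b, (Polynomial.aeval C (g * h)) a b ∈ Set.range (algebraMap D K) := by
  intro C hCt hCD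
  have key : ∀ (n : ℕ) (hn : min i j ≤ n) (p : Polynomial K),
      (∀ C' : Matrix (Fin n) (Fin n) K, C'.BlockTriangular id →
        (∀ a b, C' a b ∈ Set.range (algebraMap D K)) →
        (Polynomial.aeval C' p).BlockTriangular id ∧
          ∀ a b, (Polynomial.aeval C' p) a b ∈ Set.range (algebraMap D K)) →
      (Polynomial.aeval C p).BlockTriangular id ∧
        ∀ a b, (Polynomial.aeval C p) a b ∈ Set.range (algebraMap D K) := by
    intro n hn p hp
    have hPt : (padMat C : Matrix (Fin n) (Fin n) K).BlockTriangular id := by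
      intro a b hab
      simp only [padMat]
      split
      · split
        · exact hCt (show (⟨(b : ℕ), _⟩ : Fin (min i j)) < ⟨(a : ℕ), _⟩ from hab)
        · rfl
      · rfl
    have hPD : ∀ a b, (padMat C : Matrix (Fin n) (Fin n) K) a b ∈
        Set.range (algebraMap D K) := by
      intro a b
      simp only [padMat]
      split
      · split
        · exact hCD _ _
        · exact ⟨0, map_zero _⟩
      · exact ⟨0, map_zero _⟩
    obtain ⟨hqt, hqD⟩ := hp (padMat C) hPt hPD
    constructor
    · intro a b hab
      rw [← padMat_aeval hn C p a b]
      exact hqt (show Fin.castLE hn b < Fin.castLE hn a from hab)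
    · intro a b
      rw [← padMat_aeval hn C p a b]
      exact hqD _ _
  obtain ⟨hgt, hgD⟩ := key i (min_le_left i j) g hg
  obtain ⟨hht, hhD⟩ := key j (min_le_right i j) h hh
  rw [map_mul]
  refine ⟨hgt.mul hht, fun a b => ?_⟩
  rw [Matrix.mul_apply]
  have : ∀ x ∈ Set.range (algebraMap D K), x ∈ (algebraMap D K).range := fun x hx => hx
  show _ ∈ (algebraMap D K).range
  exact Subring.sum_mem _ fun c _ => Subring.mul_mem _ (this _ (hgD a c)) (this _ (hhD c b))
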